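/- Let 0 < λ < 1 and let γ be an admissible LCFS pair configuration. Then the series ∑_{x1,y1,x2,y2 ≥ 1} H(x1,y1,x2,y2) converges absolutely and equals λ − 2·γ^{pos}(1), where γ^{pos}(1) := ∑_{x2≥1} γ(1,x2). Consequently, if H(x1,y1,x2,y2) = 0 for all indices, then q(0) = 1 − λ. -/

import Mathlib

open scoped BigOperators

/-- `δ(x1,y1,x2) = ∑_{y2} δ(x1,y1,x2,y2)`. -/
noncomputable def mar3 (del : ℕ → ℕ → ℕ → ℕ → ℝ) (x1 y1 x2 : ℕ) : ℝ :=
  ∑' y2 : ℕ, del x1 y1 x2 y2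

/-- `δ(x1,x2) = ∑_{y1,y2} δ(x1,y1,x2,y2)`. -/
noncomputable def mar2 (del : ℕ → ℕ → ℕ → ℕ → ℝ) (x1 x2 : ℕ) : ℝ :=
  ∑' yy : ℕ × ℕ, del x1 yy.1 x2 yy.2

/-- `q(x) = 2δ(1,x)` for `x ≥ 1`, and `q(0) = 1 − ∑_{x≥1} q(x)`. -/
noncomputable def qPos (del : ℕ → ℕ → ℕ → ℕ → ℝ) (x : ℕ) : ℝ :=
  if x = 0 then 1 - ∑' z : ℕ, 2 * mar2 del 1 (z + 1) else 2 * mar2 del 1 x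

/-- `κ(x_a,x_b) = ∑_{x'=1}^{x_a} δ(x',1,x_b)/δ(x',x_b)`. -/
noncomputable def kap (del : ℕ → ℕ → ℕ → ℕ → ℝ) (xa xb : ℕ) : ℝ :=
  ∑ x' ∈ Finset.Icc 1 xa, mar3 del x' 1 xb / mar2 del x' xb

/-- An admissible position/queue-length pair configuration: nonnegative,
vanishing outside `1 ≤ x1 ≤ x2`, `1 ≤ y1 ≤ y2`, symmetric in the two replicas,
with finite first moment of the queue length and positive marginals. -/
def AdmissibleQuad (del : ℕ → ℕ → ℕ → ℕ → ℝ) : Prop :=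
  (∀ x1 y1 x2 y2, 0 ≤ del x1 y1 x2 y2) ∧
  (∀ x1 y1 x2 y2, x1 = 0 ∨ y1 = 0 ∨ x2 = 0 ∨ y2 = 0 ∨ x2 < x1 ∨ y2 < y1 →
      del x1 y1 x2 y2 = 0) ∧
  (∀ x1 y1 x2 y2, del x1 y1 x2 y2 = del y1 x1 y2 x2) ∧
  Summable (fun v : ℕ × ℕ × ℕ × ℕ =>
      (v.2.2.1 : ℝ) * del v.1 v.2.1 v.2.2.1 v.2.2.2) ∧
  (∀ x1 x2 : ℕ, 1 ≤ x1 → x1 ≤ x2 → 0 < mar2 del x1 x2)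

/-- The LCFS pair drift `H(x1,y1,x2,y2)`, where `φ = kap`. -/
noncomputable def HLCFS (lam : ℝ) (gam : ℕ → ℕ → ℕ → ℕ → ℝ)
    (x1 y1 x2 y2 : ℕ) : ℝ :=
  lam * qPos gam (x2 - 1) * qPos gam (y2 - 1) *
      (if x1 = 1 ∧ y1 = 1 then 1 else 0)
    - 4 * lam * gam x1 y1 x2 y2
    + 2 * lam * gam (x1 - 1) y1 (x2 - 1) y2 + 2 * lam * gam x1 (y1 - 1) x2 (y2 - 1)
    - gam x1 y1 x2 y2 *
        (2 + kap gam x2 x2 - mar3 gam x1 1 x2 / mar2 gam x1 x2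
          + kap gam y2 y2 - mar3 gam y1 1 y2 / mar2 gam y1 y2)
    + gam (x1 + 1) y1 (x2 + 1) y2 * (1 + kap gam x1 (x2 + 1))
    + gam x1 (y1 + 1) x2 (y2 + 1) * (1 + kap gam y1 (y2 + 1))
    + gam x1 y1 (x2 + 1) y2 * (kap gam (x2 + 1) (x2 + 1) - kap gam x1 (x2 + 1))
    + gam x1 y1 x2 (y2 + 1) * (kap gam (y2 + 1) (y2 + 1) - kap gam y1 (y2 + 1))

namespace LCFSaux

abbrev V : Type := ℕ × ℕ × ℕ × ℕ

noncomputable def gsh (gam : ℕ → ℕ → ℕ → ℕ → ℝ) (v : V) : ℝ :=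
  gam (v.1 + 1) (v.2.1 + 1) (v.2.2.1 + 1) (v.2.2.2 + 1)

def swapE : V ≃ V where
  toFun v := (v.2.1, v.1, v.2.2.2, v.2.2.1)
  invFun v := (v.2.1, v.1, v.2.2.2, v.2.2.1)
  left_inv v := rfl
  right_inv v := rfl

def shf : V → V := fun v => (v.1 + 1, v.2.1 + 1, v.2.2.1 + 1, v.2.2.2 + 1)

lemma shf_inj : Function.Injective shf := by
  rintro ⟨a, b, c, d⟩ ⟨a', b', c', d'⟩ h
  simp only [shf, Prod.mk.injEq, add_left_inj] at h
  obtain ⟨h1, h2, h3, h4⟩ := h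
  subst h1; subst h2; subst h3; subst h4; rfl

variable {gam : ℕ → ℕ → ℕ → ℕ → ℝ}

section basic
variable (hgam : AdmissibleQuad gam)
include hgam

lemma gz {x1 y1 x2 y2 : ℕ}
    (h : x1 = 0 ∨ y1 = 0 ∨ x2 = 0 ∨ y2 = 0 ∨ x2 < x1 ∨ y2 < y1) :
    gam x1 y1 x2 y2 = 0 := hgam.2.1 _ _ _ _ h

lemma sum_full : Summable (fun v : V => gam v.1 v.2.1 v.2.2.1 v.2.2.2) := by
  refine Summable.of_nonneg_of_le (fun v => hgam.1 _ _ _ _) (fun v => ?_) hgam.2.2.2.1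
  rcases Nat.eq_zero_or_pos v.2.2.1 with h | h
  · rw [gz hgam (Or.inr <| Or.inr <| Or.inl h)]
    positivity
  · exact le_mul_of_one_le_left (hgam.1 _ _ _ _) (by exact_mod_cast h)

lemma sum_wy :
    Summable (fun v : V => (v.2.2.2 : ℝ) * gam v.1 v.2.1 v.2.2.1 v.2.2.2) := by
  have h2 : Summable
      ((fun v : V => (v.2.2.1 : ℝ) * gam v.1 v.2.1 v.2.2.1 v.2.2.2) ∘ swapE) :=
    (Equiv.summable_iff swapE).2 hgam.2.2.2.1
  refine h2.congr fun v => ?_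
  simp only [Function.comp, swapE, Equiv.coe_fn_mk]
  rw [hgam.2.2.1 v.2.1 v.1 v.2.2.2 v.2.2.1]

lemma sum_gsh : Summable (gsh gam) :=
  ((sum_full hgam).comp_injective shf_inj).congr fun v => rfl

lemma sum_W :
    Summable (fun v : V => ((v.2.2.1 : ℝ) + v.2.2.2 + 8) * gsh gam v) := by
  have hx : Summable (fun v : V => ((v.2.2.1 : ℝ) + 1) * gsh gam v) :=
    ((hgam.2.2.2.1).comp_injective shf_inj).congr fun v => by
      simp only [Function.comp, shf, gsh]; push_cast; ring
  have hy : Summable (fun v : V => ((v.2.2.2 : ℝ) + 1) * gsh gam v) :=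
    ((sum_wy hgam).comp_injective shf_inj).congr fun v => by
      simp only [Function.comp, shf, gsh]; push_cast; ring
  have hg : Summable (fun v : V => (6 : ℝ) * gsh gam v) := (sum_gsh hgam).mul_left 6
  exact ((hx.add hy).add hg).congr fun v => by ring

lemma slice2 (x1 x2 : ℕ) : Summable (fun y : ℕ × ℕ => gam x1 y.1 x2 y.2) := by
  refine (sum_full hgam).comp_injective (i := fun y : ℕ × ℕ => (x1, y.1, x2, y.2)) ?_
  rintro ⟨a, b⟩ ⟨a', b'⟩ h
  simp only [Prod.mk.injEq] at h
  exact Prod.ext h.2.1 h.2.2.2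

lemma slice1 (x1 y1 x2 : ℕ) : Summable (fun y2 : ℕ => gam x1 y1 x2 y2) := by
  refine (slice2 hgam x1 x2).comp_injective (i := fun y2 : ℕ => (y1, y2)) ?_
  intro a b h
  simpa using h

end basic

lemma mar2_nonneg (hnn : ∀ x1 y1 x2 y2, 0 ≤ gam x1 y1 x2 y2) (x1 x2 : ℕ) :
    0 ≤ mar2 gam x1 x2 := tsum_nonneg fun y => hnn _ _ _ _

lemma mar3_nonneg (hnn : ∀ x1 y1 x2 y2, 0 ≤ gam x1 y1 x2 y2) (x1 y1 x2 : ℕ) :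
    0 ≤ mar3 gam x1 y1 x2 := tsum_nonneg fun y => hnn _ _ _ _

section basic2
variable (hgam : AdmissibleQuad gam)
include hgam

lemma mar3_le_mar2 (x1 x2 : ℕ) : mar3 gam x1 1 x2 ≤ mar2 gam x1 x2 := by
  refine Summable.tsum_le_tsum_of_inj (fun y2 : ℕ => ((1 : ℕ), y2))
    (fun a b h => by simpa using h) (fun c _ => hgam.1 _ _ _ _)
    (fun b => le_rfl) (slice1 hgam x1 1 x2) (slice2 hgam x1 x2)

end basic2

lemma kap_zero (gam : ℕ → ℕ → ℕ → ℕ → ℝ) (b : ℕ) : kap gam 0 b = 0 := by simp [kap]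

lemma kap_succ (gam : ℕ → ℕ → ℕ → ℕ → ℝ) (a b : ℕ) :
    kap gam (a + 1) b = kap gam a b + mar3 gam (a + 1) 1 b / mar2 gam (a + 1) b := by
  rw [kap, kap, Finset.sum_Icc_succ_top (Nat.succ_le_succ (Nat.zero_le a))]

lemma kap_one (gam : ℕ → ℕ → ℕ → ℕ → ℝ) (b : ℕ) :
    kap gam 1 b = mar3 gam 1 1 b / mar2 gam 1 b := by simp [kap]

lemma kap_nonneg (hnn : ∀ x1 y1 x2 y2, 0 ≤ gam x1 y1 x2 y2) (a b : ℕ) :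
    0 ≤ kap gam a b :=
  Finset.sum_nonneg fun i _ => div_nonneg (mar3_nonneg hnn _ _ _) (mar2_nonneg hnn _ _)

lemma kap_le (hgam : AdmissibleQuad gam) {a b : ℕ} (h : a ≤ b) :
    kap gam a b ≤ (a : ℝ) := by
  have h1 : kap gam a b ≤ ∑ _x' ∈ Finset.Icc 1 a, (1 : ℝ) := by
    refine Finset.sum_le_sum fun i hi => ?_
    rw [Finset.mem_Icc] at hi
    rw [div_le_one (hgam.2.2.2.2 i b hi.1 (hi.2.trans h))]
    exact mar3_le_mar2 hgam i b
  simpa [Nat.card_Icc] using h1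

lemma le_of_gsh_ne (hgam : AdmissibleQuad gam) {v : V} (h : gsh gam v ≠ 0) :
    v.1 ≤ v.2.2.1 ∧ v.2.1 ≤ v.2.2.2 := by
  constructor
  · by_contra hc
    push_neg at hc
    exact h (gz hgam (by omega))
  · by_contra hc
    push_neg at hc
    exact h (gz hgam (by omega))


def rot3 : (ℕ × ℕ × ℕ) ≃ (ℕ × ℕ × ℕ) where
  toFun w := (w.2.1, w.1, w.2.2)
  invFun w := (w.2.1, w.1, w.2.2)
  left_inv w := rfl
  right_inv w := rfl

section qlem
variable {gam : ℕ → ℕ → ℕ → ℕ → ℝ} (hgam : AdmissibleQuad gam)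
include hgam

lemma sum_mar2_slice :
    Summable (fun p : ℕ × (ℕ × ℕ) => gam 1 p.2.1 p.1 p.2.2) := by
  refine (sum_full hgam).comp_injective
    (i := fun p : ℕ × (ℕ × ℕ) => (1, p.2.1, p.1, p.2.2)) ?_
  rintro ⟨a, b, c⟩ ⟨a', b', c'⟩ h
  simp only [Prod.mk.injEq] at h
  exact Prod.ext h.2.2.1 (Prod.ext h.2.1 h.2.2.2)

lemma sum_mar2 : Summable (fun c : ℕ => mar2 gam 1 c) :=
  (sum_mar2_slice hgam).prod

lemma sum_qsucc : Summable (fun n : ℕ => 2 * mar2 gam 1 (n + 1)) :=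
  ((sum_mar2 hgam).comp_injective (add_left_injective 1)).mul_left 2

lemma sum_qshift : Summable (fun n : ℕ => qPos gam (n + 1)) :=
  (sum_qsucc hgam).congr fun n => by simp [qPos]

lemma sum_q : Summable (qPos gam) :=
  (summable_nat_add_iff 1).1 (sum_qshift hgam)

lemma q_tsum_one : ∑' n : ℕ, qPos gam n = 1 := by
  rw [tsum_eq_zero_add' (sum_qshift hgam)]
  have h1 : ∑' n : ℕ, qPos gam (n + 1) = ∑' n : ℕ, 2 * mar2 gam 1 (n + 1) :=
    tsum_congr fun n => by simp [qPos]
  have h2 : qPos gam 0 = 1 - ∑' z : ℕ, 2 * mar2 gam 1 (z + 1) := by simp [qPos]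
  rw [h1, h2]
  ring

lemma mar2_succ_eq (c : ℕ) :
    mar2 gam 1 (c + 1) = ∑' y : ℕ × ℕ, gam 1 (y.1 + 1) (c + 1) (y.2 + 1) := by
  refine (Function.Injective.tsum_eq (g := fun y : ℕ × ℕ => (y.1 + 1, y.2 + 1))
    (f := fun y : ℕ × ℕ => gam 1 y.1 (c + 1) y.2) ?_ ?_).symm
  · rintro ⟨a, b⟩ ⟨a', b'⟩ h
    simp only [Prod.mk.injEq, add_left_inj] at h
    exact Prod.ext h.1 h.2
  · intro y hy
    rcases Nat.eq_zero_or_pos y.1 with h1 | h1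
    · exact absurd (gz hgam (Or.inr (Or.inl h1))) hy
    rcases Nat.eq_zero_or_pos y.2 with h2 | h2
    · exact absurd (gz hgam (Or.inr (Or.inr (Or.inr (Or.inl h2))))) hy
    refine ⟨(y.1 - 1, y.2 - 1), ?_⟩
    obtain ⟨y1, y2⟩ := y
    simp only [Prod.mk.injEq]
    constructor <;> omega

lemma P_eq :
    ∑' c : ℕ, mar2 gam 1 (c + 1)
      = ∑' w : ℕ × ℕ × ℕ, gam 1 (w.1 + 1) (w.2.1 + 1) (w.2.2 + 1) := by
  have hsum : Summable (fun p : ℕ × (ℕ × ℕ) => gam 1 (p.2.1 + 1) (p.1 + 1) (p.2.2 + 1)) := by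
    refine (sum_full hgam).comp_injective
      (i := fun p : ℕ × (ℕ × ℕ) => (1, p.2.1 + 1, p.1 + 1, p.2.2 + 1)) ?_
    rintro ⟨a, b, c⟩ ⟨a', b', c'⟩ h
    simp only [Prod.mk.injEq, add_left_inj] at h
    exact Prod.ext h.2.2.1 (Prod.ext h.2.1 h.2.2.2)
  calc ∑' c : ℕ, mar2 gam 1 (c + 1)
      = ∑' c : ℕ, ∑' y : ℕ × ℕ, gam 1 (y.1 + 1) (c + 1) (y.2 + 1) :=
        tsum_congr (mar2_succ_eq hgam)
    _ = ∑' p : ℕ × (ℕ × ℕ), gam 1 (p.2.1 + 1) (p.1 + 1) (p.2.2 + 1) :=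
        (Summable.tsum_prod hsum).symm
    _ = ∑' w : ℕ × ℕ × ℕ, gam 1 (w.1 + 1) (w.2.1 + 1) (w.2.2 + 1) := by
        exact (Equiv.tsum_eq rot3 (fun p : ℕ × ℕ × ℕ =>
          gam 1 (p.2.1 + 1) (p.1 + 1) (p.2.2 + 1))).symm

end qlem


section tdefs

variable (lam : ℝ) (gam : ℕ → ℕ → ℕ → ℕ → ℝ)

noncomputable def tA (v : V) : ℝ :=
  lam * qPos gam v.2.2.1 * qPos gam v.2.2.2 * (if v.1 = 0 ∧ v.2.1 = 0 then 1 else 0)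

noncomputable def tB (v : V) : ℝ := -(4 * lam * gsh gam v)

noncomputable def tC (v : V) : ℝ := 2 * lam * gam v.1 (v.2.1 + 1) v.2.2.1 (v.2.2.2 + 1)

noncomputable def tD (v : V) : ℝ := 2 * lam * gam (v.1 + 1) v.2.1 (v.2.2.1 + 1) v.2.2.2

noncomputable def tE (v : V) : ℝ :=
  -(gsh gam v * (2 + kap gam (v.2.2.1 + 1) (v.2.2.1 + 1)
      - mar3 gam (v.1 + 1) 1 (v.2.2.1 + 1) / mar2 gam (v.1 + 1) (v.2.2.1 + 1)
      + kap gam (v.2.2.2 + 1) (v.2.2.2 + 1)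
      - mar3 gam (v.2.1 + 1) 1 (v.2.2.2 + 1) / mar2 gam (v.2.1 + 1) (v.2.2.2 + 1)))

noncomputable def tF (v : V) : ℝ :=
  gam (v.1 + 1 + 1) (v.2.1 + 1) (v.2.2.1 + 1 + 1) (v.2.2.2 + 1) *
    (1 + kap gam (v.1 + 1) (v.2.2.1 + 1 + 1))

noncomputable def tG (v : V) : ℝ :=
  gam (v.1 + 1) (v.2.1 + 1 + 1) (v.2.2.1 + 1) (v.2.2.2 + 1 + 1) *
    (1 + kap gam (v.2.1 + 1) (v.2.2.2 + 1 + 1))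

noncomputable def tH (v : V) : ℝ :=
  gam (v.1 + 1) (v.2.1 + 1) (v.2.2.1 + 1 + 1) (v.2.2.2 + 1) *
    (kap gam (v.2.2.1 + 1 + 1) (v.2.2.1 + 1 + 1) - kap gam (v.1 + 1) (v.2.2.1 + 1 + 1))

noncomputable def tI (v : V) : ℝ :=
  gam (v.1 + 1) (v.2.1 + 1) (v.2.2.1 + 1) (v.2.2.2 + 1 + 1) *
    (kap gam (v.2.2.2 + 1 + 1) (v.2.2.2 + 1 + 1) - kap gam (v.2.1 + 1) (v.2.2.2 + 1 + 1))

noncomputable def uF (v : V) : ℝ :=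
  if 1 ≤ v.1 ∧ 1 ≤ v.2.2.1 then gsh gam v * (1 + kap gam v.1 (v.2.2.1 + 1)) else 0

noncomputable def uG (v : V) : ℝ :=
  if 1 ≤ v.2.1 ∧ 1 ≤ v.2.2.2 then gsh gam v * (1 + kap gam v.2.1 (v.2.2.2 + 1)) else 0

noncomputable def uH (v : V) : ℝ :=
  if 1 ≤ v.2.2.1 then
    gsh gam v * (kap gam (v.2.2.1 + 1) (v.2.2.1 + 1) - kap gam (v.1 + 1) (v.2.2.1 + 1))
  else 0

noncomputable def uI (v : V) : ℝ :=
  if 1 ≤ v.2.2.2 then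
    gsh gam v * (kap gam (v.2.2.2 + 1) (v.2.2.2 + 1) - kap gam (v.2.1 + 1) (v.2.2.2 + 1))
  else 0

end tdefs

lemma H_decomp (lam : ℝ) (gam : ℕ → ℕ → ℕ → ℕ → ℝ) (v : V) :
    HLCFS lam gam (v.1 + 1) (v.2.1 + 1) (v.2.2.1 + 1) (v.2.2.2 + 1)
      = tA lam gam v + (tB lam gam v + (tC lam gam v + (tD lam gam v +
        (tE gam v + (tF gam v + (tG gam v + (tH gam v + tI gam v))))))) := by
  obtain ⟨a, b, c, d⟩ := v
  have h1 : (a + 1 = 1 ∧ b + 1 = 1) ↔ (a = 0 ∧ b = 0) := by omega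
  simp only [HLCFS, tA, tB, tC, tD, tE, tF, tG, tH, tI, gsh, Nat.add_sub_cancel]
  rw [if_congr h1 rfl rfl]
  ring

lemma ite_factor {c : Prop} [Decidable c] (g x : ℝ) :
    (if c then g * x else 0) = g * (if c then x else 0) := by
  split_ifs <;> simp

lemma collapse {gam : ℕ → ℕ → ℕ → ℕ → ℝ} (hgam : AdmissibleQuad gam) (v : V) :
    tE gam v + (uF gam v + (uG gam v + (uH gam v + uI gam v)))
      = -(gsh gam v * ((if v.1 = 0 then 1 else 0) + (if v.2.1 = 0 then 1 else 0))) := by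
  obtain ⟨a, b, c, d⟩ := v
  by_cases hg : gsh gam (a, b, c, d) = 0
  · simp [tE, uF, uG, uH, uI, hg]
  · obtain ⟨hac, hbd⟩ := le_of_gsh_ne hgam hg
    simp only at hac hbd
    have hx : -(1 + kap gam (c + 1) (c + 1)
          - mar3 gam (a + 1) 1 (c + 1) / mar2 gam (a + 1) (c + 1))
        + (if 1 ≤ a ∧ 1 ≤ c then 1 + kap gam a (c + 1) else 0)
        + (if 1 ≤ c then kap gam (c + 1) (c + 1) - kap gam (a + 1) (c + 1) else 0)
        = -(if a = 0 then 1 else 0) := by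
      rcases Nat.eq_zero_or_pos a with ha | ha
      · subst ha
        rcases Nat.eq_zero_or_pos c with hc | hc
        · subst hc
          rw [if_neg (by omega), if_neg (by omega), if_pos rfl]
          rw [show (0 : ℕ) + 1 = 1 from rfl, kap_one]
          ring
        · have hc' : 1 ≤ c := hc
          rw [if_neg (by omega), if_pos hc', if_pos rfl]
          rw [show (0 : ℕ) + 1 = 1 from rfl, kap_one]
          ring
      · have ha' : 1 ≤ a := ha
        have hc : 1 ≤ c := le_trans ha hac
        rw [if_pos ⟨ha', hc⟩, if_pos hc, if_neg (by omega)]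
        rw [kap_succ gam a (c + 1)]
        ring
    have hy : -(1 + kap gam (d + 1) (d + 1)
          - mar3 gam (b + 1) 1 (d + 1) / mar2 gam (b + 1) (d + 1))
        + (if 1 ≤ b ∧ 1 ≤ d then 1 + kap gam b (d + 1) else 0)
        + (if 1 ≤ d then kap gam (d + 1) (d + 1) - kap gam (b + 1) (d + 1) else 0)
        = -(if b = 0 then 1 else 0) := by
      rcases Nat.eq_zero_or_pos b with hb | hb
      · subst hb
        rcases Nat.eq_zero_or_pos d with hd | hd
        · subst hd
          rw [if_neg (by omega), if_neg (by omega), if_pos rfl]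
          rw [show (0 : ℕ) + 1 = 1 from rfl, kap_one]
          ring
        · have hd' : 1 ≤ d := hd
          rw [if_neg (by omega), if_pos hd', if_pos rfl]
          rw [show (0 : ℕ) + 1 = 1 from rfl, kap_one]
          ring
      · have hb' : 1 ≤ b := hb
        have hd : 1 ≤ d := le_trans hb hbd
        rw [if_pos ⟨hb', hd⟩, if_pos hd, if_neg (by omega)]
        rw [kap_succ gam b (d + 1)]
        ring
    simp only [tE, uF, uG, uH, uI]
    rw [ite_factor, ite_factor, ite_factor, ite_factor]
    linear_combination (gsh gam (a, b, c, d)) * (hx + hy)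


/-! ### Injections for reindexing -/

def j1 : V → V := fun v => (v.1 + 1, v.2.1, v.2.2.1 + 1, v.2.2.2)
def j2 : V → V := fun v => (v.1, v.2.1 + 1, v.2.2.1, v.2.2.2 + 1)
def j3 : V → V := fun v => (v.1, v.2.1, v.2.2.1 + 1, v.2.2.2)
def j4 : V → V := fun v => (v.1, v.2.1, v.2.2.1, v.2.2.2 + 1)
def jA : ℕ × ℕ → V := fun p => (0, 0, p.1, p.2)
def jP : ℕ × ℕ × ℕ → V := fun w => (0, w.1, w.2.1, w.2.2)
def jQ : ℕ × ℕ × ℕ → V := fun w => (w.1, 0, w.2.1, w.2.2)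

lemma j1_inj : Function.Injective j1 := by
  rintro ⟨a, b, c, d⟩ ⟨a', b', c', d'⟩ h
  simp only [j1, Prod.mk.injEq, add_left_inj] at h
  obtain ⟨h1, h2, h3, h4⟩ := h
  subst h1; subst h2; subst h3; subst h4; rfl

lemma j2_inj : Function.Injective j2 := by
  rintro ⟨a, b, c, d⟩ ⟨a', b', c', d'⟩ h
  simp only [j2, Prod.mk.injEq, add_left_inj] at h
  obtain ⟨h1, h2, h3, h4⟩ := h
  subst h1; subst h2; subst h3; subst h4; rfl

lemma j3_inj : Function.Injective j3 := by
  rintro ⟨a, b, c, d⟩ ⟨a', b', c', d'⟩ h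
  simp only [j3, Prod.mk.injEq, add_left_inj] at h
  obtain ⟨h1, h2, h3, h4⟩ := h
  subst h1; subst h2; subst h3; subst h4; rfl

lemma j4_inj : Function.Injective j4 := by
  rintro ⟨a, b, c, d⟩ ⟨a', b', c', d'⟩ h
  simp only [j4, Prod.mk.injEq, add_left_inj] at h
  obtain ⟨h1, h2, h3, h4⟩ := h
  subst h1; subst h2; subst h3; subst h4; rfl

lemma jA_inj : Function.Injective jA := by
  rintro ⟨a, b⟩ ⟨a', b'⟩ h
  simp only [jA, Prod.mk.injEq] at h
  obtain ⟨-, -, h3, h4⟩ := h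
  subst h3; subst h4; rfl

lemma jP_inj : Function.Injective jP := by
  rintro ⟨a, b, c⟩ ⟨a', b', c'⟩ h
  simp only [jP, Prod.mk.injEq] at h
  obtain ⟨-, h2, h3, h4⟩ := h
  subst h2; subst h3; subst h4; rfl

lemma jQ_inj : Function.Injective jQ := by
  rintro ⟨a, b, c⟩ ⟨a', b', c'⟩ h
  simp only [jQ, Prod.mk.injEq] at h
  obtain ⟨h1, -, h3, h4⟩ := h
  subst h1; subst h3; subst h4; rfl

lemma mem_range_j1 {x : V} (h1 : 1 ≤ x.1) (h3 : 1 ≤ x.2.2.1) : x ∈ Set.range j1 := by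
  obtain ⟨a, b, c, d⟩ := x
  have h1' : 1 ≤ a := h1
  have h3' : 1 ≤ c := h3
  exact ⟨(a - 1, b, c - 1, d), by simp only [j1, Prod.mk.injEq, and_true, true_and]; omega⟩

lemma mem_range_j2 {x : V} (h2 : 1 ≤ x.2.1) (h4 : 1 ≤ x.2.2.2) : x ∈ Set.range j2 := by
  obtain ⟨a, b, c, d⟩ := x
  have h2' : 1 ≤ b := h2
  have h4' : 1 ≤ d := h4
  exact ⟨(a, b - 1, c, d - 1), by simp only [j2, Prod.mk.injEq, and_true, true_and]; omega⟩

lemma mem_range_j3 {x : V} (h3 : 1 ≤ x.2.2.1) : x ∈ Set.range j3 := by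
  obtain ⟨a, b, c, d⟩ := x
  have h3' : 1 ≤ c := h3
  exact ⟨(a, b, c - 1, d), by simp only [j3, Prod.mk.injEq, and_true, true_and]; omega⟩

lemma mem_range_j4 {x : V} (h4 : 1 ≤ x.2.2.2) : x ∈ Set.range j4 := by
  obtain ⟨a, b, c, d⟩ := x
  have h4' : 1 ≤ d := h4
  exact ⟨(a, b, c, d - 1), by simp only [j4, Prod.mk.injEq, and_true, true_and]; omega⟩

lemma mem_range_jA {x : V} (h1 : x.1 = 0) (h2 : x.2.1 = 0) : x ∈ Set.range jA := by
  obtain ⟨a, b, c, d⟩ := x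
  have h1' : a = 0 := h1
  have h2' : b = 0 := h2
  exact ⟨(c, d), by subst h1'; subst h2'; rfl⟩

lemma mem_range_jP {x : V} (h1 : x.1 = 0) : x ∈ Set.range jP := by
  obtain ⟨a, b, c, d⟩ := x
  have h1' : a = 0 := h1
  exact ⟨(b, c, d), by subst h1'; rfl⟩

lemma mem_range_jQ {x : V} (h2 : x.2.1 = 0) : x ∈ Set.range jQ := by
  obtain ⟨a, b, c, d⟩ := x
  have h2' : b = 0 := h2
  exact ⟨(a, c, d), by subst h2'; rfl⟩

/-! ### Bounds and summability -/

lemma uF_pos {gam : ℕ → ℕ → ℕ → ℕ → ℝ} {v : V} (h : 1 ≤ v.1 ∧ 1 ≤ v.2.2.1) :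
    uF gam v = gsh gam v * (1 + kap gam v.1 (v.2.2.1 + 1)) := if_pos h

lemma uF_neg {gam : ℕ → ℕ → ℕ → ℕ → ℝ} {v : V} (h : ¬(1 ≤ v.1 ∧ 1 ≤ v.2.2.1)) :
    uF gam v = 0 := if_neg h

lemma uG_pos {gam : ℕ → ℕ → ℕ → ℕ → ℝ} {v : V} (h : 1 ≤ v.2.1 ∧ 1 ≤ v.2.2.2) :
    uG gam v = gsh gam v * (1 + kap gam v.2.1 (v.2.2.2 + 1)) := if_pos h

lemma uG_neg {gam : ℕ → ℕ → ℕ → ℕ → ℝ} {v : V} (h : ¬(1 ≤ v.2.1 ∧ 1 ≤ v.2.2.2)) :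
    uG gam v = 0 := if_neg h

lemma uH_pos {gam : ℕ → ℕ → ℕ → ℕ → ℝ} {v : V} (h : 1 ≤ v.2.2.1) :
    uH gam v = gsh gam v *
      (kap gam (v.2.2.1 + 1) (v.2.2.1 + 1) - kap gam (v.1 + 1) (v.2.2.1 + 1)) := if_pos h

lemma uH_neg {gam : ℕ → ℕ → ℕ → ℕ → ℝ} {v : V} (h : ¬(1 ≤ v.2.2.1)) :
    uH gam v = 0 := if_neg h

lemma uI_pos {gam : ℕ → ℕ → ℕ → ℕ → ℝ} {v : V} (h : 1 ≤ v.2.2.2) :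
    uI gam v = gsh gam v *
      (kap gam (v.2.2.2 + 1) (v.2.2.2 + 1) - kap gam (v.2.1 + 1) (v.2.2.2 + 1)) := if_pos h

lemma uI_neg {gam : ℕ → ℕ → ℕ → ℕ → ℝ} {v : V} (h : ¬(1 ≤ v.2.2.2)) :
    uI gam v = 0 := if_neg h



section bounds
variable {lam : ℝ} {gam : ℕ → ℕ → ℕ → ℕ → ℝ}
variable (hgam : AdmissibleQuad gam)
include hgam

lemma summable_of_bound {f : V → ℝ}
    (hb : ∀ v, |f v| ≤ ((v.2.2.1 : ℝ) + v.2.2.2 + 8) * gsh gam v) : Summable f :=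
  Summable.of_abs (Summable.of_nonneg_of_le (fun v => abs_nonneg _) hb (sum_W hgam))

lemma gsh_nonneg (v : V) : 0 ≤ gsh gam v := hgam.1 _ _ _ _

lemma r_bound {x1 x2 : ℕ} (h1 : 1 ≤ x1) (h : x1 ≤ x2) :
    mar3 gam x1 1 x2 / mar2 gam x1 x2 ≤ 1 := by
  rw [div_le_one (hgam.2.2.2.2 x1 x2 h1 h)]
  exact mar3_le_mar2 hgam x1 x2

lemma abs_tE_le (v : V) :
    |tE gam v| ≤ ((v.2.2.1 : ℝ) + v.2.2.2 + 8) * gsh gam v := by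
  obtain ⟨a, b, c, d⟩ := v
  by_cases hg : gsh gam (a, b, c, d) = 0
  · simp only [tE, hg, zero_mul, neg_zero, abs_zero, mul_zero]
    positivity
  · obtain ⟨hac, hbd⟩ := le_of_gsh_ne hgam hg
    simp only at hac hbd
    have hgs : 0 ≤ gsh gam (a, b, c, d) := gsh_nonneg hgam _
    have hKx0 : 0 ≤ kap gam (c + 1) (c + 1) := kap_nonneg hgam.1 _ _
    have hKx1 : kap gam (c + 1) (c + 1) ≤ (c : ℝ) + 1 := by
      simpa using kap_le hgam (le_refl (c + 1))
    have hKy0 : 0 ≤ kap gam (d + 1) (d + 1) := kap_nonneg hgam.1 _ _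
    have hKy1 : kap gam (d + 1) (d + 1) ≤ (d : ℝ) + 1 := by
      simpa using kap_le hgam (le_refl (d + 1))
    have hrx0 : 0 ≤ mar3 gam (a + 1) 1 (c + 1) / mar2 gam (a + 1) (c + 1) :=
      div_nonneg (mar3_nonneg hgam.1 _ _ _) (mar2_nonneg hgam.1 _ _)
    have hrx1 : mar3 gam (a + 1) 1 (c + 1) / mar2 gam (a + 1) (c + 1) ≤ 1 :=
      r_bound hgam (Nat.succ_le_succ (Nat.zero_le a)) (Nat.succ_le_succ hac)
    have hry0 : 0 ≤ mar3 gam (b + 1) 1 (d + 1) / mar2 gam (b + 1) (d + 1) :=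
      div_nonneg (mar3_nonneg hgam.1 _ _ _) (mar2_nonneg hgam.1 _ _)
    have hry1 : mar3 gam (b + 1) 1 (d + 1) / mar2 gam (b + 1) (d + 1) ≤ 1 :=
      r_bound hgam (Nat.succ_le_succ (Nat.zero_le b)) (Nat.succ_le_succ hbd)
    simp only [tE, abs_neg, abs_mul, abs_of_nonneg hgs]
    rw [mul_comm]
    refine mul_le_mul_of_nonneg_right ?_ hgs
    rw [abs_le]
    constructor <;> [linarith; linarith]

lemma abs_tB_le (hlam0 : 0 < lam) (hlam1 : lam < 1) (v : V) :
    |tB lam gam v| ≤ ((v.2.2.1 : ℝ) + v.2.2.2 + 8) * gsh gam v := by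
  have hgs : 0 ≤ gsh gam v := gsh_nonneg hgam v
  have h8 : (4 : ℝ) ≤ (v.2.2.1 : ℝ) + v.2.2.2 + 8 := by
    have hc : (0:ℝ) ≤ (v.2.2.1 : ℝ) := by positivity
    have hd : (0:ℝ) ≤ (v.2.2.2 : ℝ) := by positivity
    linarith
  calc |tB lam gam v| = (4 * lam) * gsh gam v := by
        rw [tB, abs_neg, abs_mul, abs_of_nonneg hgs, abs_of_nonneg (by linarith : (0:ℝ) ≤ 4 * lam)]
    _ ≤ 4 * gsh gam v := by nlinarith
    _ ≤ ((v.2.2.1 : ℝ) + v.2.2.2 + 8) * gsh gam v := by nlinarith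

lemma abs_uF_le (v : V) :
    |uF gam v| ≤ ((v.2.2.1 : ℝ) + v.2.2.2 + 8) * gsh gam v := by
  obtain ⟨a, b, c, d⟩ := v
  by_cases hcond : 1 ≤ a ∧ 1 ≤ c
  · rw [uF_pos (v := (a, b, c, d)) (show 1 ≤ (a, b, c, d).1 ∧ 1 ≤ (a, b, c, d).2.2.1 from hcond)]
    by_cases hg : gsh gam (a, b, c, d) = 0
    · simp [hg]
    · obtain ⟨hac, -⟩ := le_of_gsh_ne hgam hg
      simp only at hac
      have hgs : 0 ≤ gsh gam (a, b, c, d) := gsh_nonneg hgam _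
      have hK0 : 0 ≤ kap gam a (c + 1) := kap_nonneg hgam.1 _ _
      have hK1 : kap gam a (c + 1) ≤ (a : ℝ) := kap_le hgam (by omega)
      have hca : (a : ℝ) ≤ (c : ℝ) := by exact_mod_cast hac
      have hd0 : (0 : ℝ) ≤ (d : ℝ) := by positivity
      rw [abs_mul, abs_of_nonneg hgs, abs_of_nonneg (by linarith : (0:ℝ) ≤ 1 + kap gam a (c + 1))]
      calc gsh gam (a, b, c, d) * (1 + kap gam a (c + 1))
          ≤ gsh gam (a, b, c, d) * ((c : ℝ) + d + 8) :=
            mul_le_mul_of_nonneg_left (by linarith) hgs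
        _ = ((c : ℝ) + d + 8) * gsh gam (a, b, c, d) := mul_comm _ _
  · rw [uF_neg (v := (a, b, c, d)) (show ¬(1 ≤ (a, b, c, d).1 ∧ 1 ≤ (a, b, c, d).2.2.1) from hcond), abs_zero]
    exact mul_nonneg (by positivity) (gsh_nonneg hgam _)

lemma abs_uG_le (v : V) :
    |uG gam v| ≤ ((v.2.2.1 : ℝ) + v.2.2.2 + 8) * gsh gam v := by
  obtain ⟨a, b, c, d⟩ := v
  by_cases hcond : 1 ≤ b ∧ 1 ≤ d
  · rw [uG_pos (v := (a, b, c, d)) (show 1 ≤ (a, b, c, d).2.1 ∧ 1 ≤ (a, b, c, d).2.2.2 from hcond)]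
    by_cases hg : gsh gam (a, b, c, d) = 0
    · simp [hg]
    · obtain ⟨-, hbd⟩ := le_of_gsh_ne hgam hg
      simp only at hbd
      have hgs : 0 ≤ gsh gam (a, b, c, d) := gsh_nonneg hgam _
      have hK0 : 0 ≤ kap gam b (d + 1) := kap_nonneg hgam.1 _ _
      have hK1 : kap gam b (d + 1) ≤ (b : ℝ) := kap_le hgam (by omega)
      have hdb : (b : ℝ) ≤ (d : ℝ) := by exact_mod_cast hbd
      have hc0 : (0 : ℝ) ≤ (c : ℝ) := by positivity
      rw [abs_mul, abs_of_nonneg hgs, abs_of_nonneg (by linarith : (0:ℝ) ≤ 1 + kap gam b (d + 1))]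
      calc gsh gam (a, b, c, d) * (1 + kap gam b (d + 1))
          ≤ gsh gam (a, b, c, d) * ((c : ℝ) + d + 8) :=
            mul_le_mul_of_nonneg_left (by linarith) hgs
        _ = ((c : ℝ) + d + 8) * gsh gam (a, b, c, d) := mul_comm _ _
  · rw [uG_neg (v := (a, b, c, d)) (show ¬(1 ≤ (a, b, c, d).2.1 ∧ 1 ≤ (a, b, c, d).2.2.2) from hcond), abs_zero]
    exact mul_nonneg (by positivity) (gsh_nonneg hgam _)

lemma abs_uH_le (v : V) :
    |uH gam v| ≤ ((v.2.2.1 : ℝ) + v.2.2.2 + 8) * gsh gam v := by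
  obtain ⟨a, b, c, d⟩ := v
  by_cases hcond : 1 ≤ c
  · rw [uH_pos (v := (a, b, c, d)) (show 1 ≤ (a, b, c, d).2.2.1 from hcond)]
    by_cases hg : gsh gam (a, b, c, d) = 0
    · simp [hg]
    · obtain ⟨hac, -⟩ := le_of_gsh_ne hgam hg
      simp only at hac
      have hgs : 0 ≤ gsh gam (a, b, c, d) := gsh_nonneg hgam _
      have hK0 : 0 ≤ kap gam (c + 1) (c + 1) := kap_nonneg hgam.1 _ _
      have hK1 : kap gam (c + 1) (c + 1) ≤ (c : ℝ) + 1 := by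
        simpa using kap_le hgam (le_refl (c + 1))
      have hL0 : 0 ≤ kap gam (a + 1) (c + 1) := kap_nonneg hgam.1 _ _
      have hL1 : kap gam (a + 1) (c + 1) ≤ (a : ℝ) + 1 := by
        simpa using kap_le hgam (Nat.succ_le_succ hac)
      have hca : (a : ℝ) ≤ (c : ℝ) := by exact_mod_cast hac
      have hd0 : (0 : ℝ) ≤ (d : ℝ) := by positivity
      rw [abs_mul, abs_of_nonneg hgs]
      have habs : |kap gam (c + 1) (c + 1) - kap gam (a + 1) (c + 1)| ≤ (c : ℝ) + d + 8 := by
        rw [abs_le]; constructor <;> linarith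
      calc gsh gam (a, b, c, d) * |kap gam (c + 1) (c + 1) - kap gam (a + 1) (c + 1)|
          ≤ gsh gam (a, b, c, d) * ((c : ℝ) + d + 8) :=
            mul_le_mul_of_nonneg_left habs hgs
        _ = ((c : ℝ) + d + 8) * gsh gam (a, b, c, d) := mul_comm _ _
  · rw [uH_neg (v := (a, b, c, d)) (show ¬(1 ≤ (a, b, c, d).2.2.1) from hcond), abs_zero]
    exact mul_nonneg (by positivity) (gsh_nonneg hgam _)

lemma abs_uI_le (v : V) :
    |uI gam v| ≤ ((v.2.2.1 : ℝ) + v.2.2.2 + 8) * gsh gam v := by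
  obtain ⟨a, b, c, d⟩ := v
  by_cases hcond : 1 ≤ d
  · rw [uI_pos (v := (a, b, c, d)) (show 1 ≤ (a, b, c, d).2.2.2 from hcond)]
    by_cases hg : gsh gam (a, b, c, d) = 0
    · simp [hg]
    · obtain ⟨-, hbd⟩ := le_of_gsh_ne hgam hg
      simp only at hbd
      have hgs : 0 ≤ gsh gam (a, b, c, d) := gsh_nonneg hgam _
      have hK0 : 0 ≤ kap gam (d + 1) (d + 1) := kap_nonneg hgam.1 _ _
      have hK1 : kap gam (d + 1) (d + 1) ≤ (d : ℝ) + 1 := by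
        simpa using kap_le hgam (le_refl (d + 1))
      have hL0 : 0 ≤ kap gam (b + 1) (d + 1) := kap_nonneg hgam.1 _ _
      have hL1 : kap gam (b + 1) (d + 1) ≤ (b : ℝ) + 1 := by
        simpa using kap_le hgam (Nat.succ_le_succ hbd)
      have hdb : (b : ℝ) ≤ (d : ℝ) := by exact_mod_cast hbd
      have hc0 : (0 : ℝ) ≤ (c : ℝ) := by positivity
      rw [abs_mul, abs_of_nonneg hgs]
      have habs : |kap gam (d + 1) (d + 1) - kap gam (b + 1) (d + 1)| ≤ (c : ℝ) + d + 8 := by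
        rw [abs_le]; constructor <;> linarith
      calc gsh gam (a, b, c, d) * |kap gam (d + 1) (d + 1) - kap gam (b + 1) (d + 1)|
          ≤ gsh gam (a, b, c, d) * ((c : ℝ) + d + 8) :=
            mul_le_mul_of_nonneg_left habs hgs
        _ = ((c : ℝ) + d + 8) * gsh gam (a, b, c, d) := mul_comm _ _
  · rw [uI_neg (v := (a, b, c, d)) (show ¬(1 ≤ (a, b, c, d).2.2.2) from hcond), abs_zero]
    exact mul_nonneg (by positivity) (gsh_nonneg hgam _)

end bounds


/-! ### Indicator terms -/

noncomputable def iA (gam : ℕ → ℕ → ℕ → ℕ → ℝ) (v : V) : ℝ :=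
  gsh gam v * (if v.1 = 0 then 1 else 0)

noncomputable def iB (gam : ℕ → ℕ → ℕ → ℕ → ℝ) (v : V) : ℝ :=
  gsh gam v * (if v.2.1 = 0 then 1 else 0)

def sw23 : (ℕ × ℕ × ℕ) ≃ (ℕ × ℕ × ℕ) where
  toFun w := (w.1, w.2.2, w.2.1)
  invFun w := (w.1, w.2.2, w.2.1)
  left_inv w := rfl
  right_inv w := rfl

section sums
variable {lam : ℝ} {gam : ℕ → ℕ → ℕ → ℕ → ℝ}
variable (hgam : AdmissibleQuad gam)
include hgam

lemma sum_tE : Summable (tE gam) := summable_of_bound hgam (abs_tE_le hgam)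
lemma sum_uF : Summable (uF gam) := summable_of_bound hgam (abs_uF_le hgam)
lemma sum_uG : Summable (uG gam) := summable_of_bound hgam (abs_uG_le hgam)
lemma sum_uH : Summable (uH gam) := summable_of_bound hgam (abs_uH_le hgam)
lemma sum_uI : Summable (uI gam) := summable_of_bound hgam (abs_uI_le hgam)

lemma sum_tB (hlam0 : 0 < lam) (hlam1 : lam < 1) : Summable (tB lam gam) :=
  summable_of_bound hgam (abs_tB_le hgam hlam0 hlam1)

/-! tB tsum -/

omit hgam in
lemma tsum_tB : ∑' v : V, tB lam gam v = -(4 * lam * ∑' v : V, gsh gam v) := by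
  rw [show tB lam gam = fun v => -(4 * lam * gsh gam v) from rfl, tsum_neg, tsum_mul_left]

/-! tC -/

lemma tC_supp : Function.support (tC lam gam) ⊆ Set.range j1 := by
  intro x hx
  have hgne : gam x.1 (x.2.1 + 1) x.2.2.1 (x.2.2.2 + 1) ≠ 0 := by
    intro h
    apply hx
    simp [tC, h]
  refine mem_range_j1 ?_ ?_
  · by_contra h
    push_neg at h
    exact hgne (gz hgam (by omega))
  · by_contra h
    push_neg at h
    exact hgne (gz hgam (by omega))

omit hgam in
lemma tC_comp (v : V) : tC lam gam (j1 v) = 2 * lam * gsh gam v := rfl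

lemma sum_tC : Summable (tC lam gam) := by
  have hz : ∀ x ∉ Set.range j1, tC lam gam x = 0 := by
    intro x hx
    by_contra h
    exact hx (tC_supp hgam h)
  have hcomp : Summable (tC lam gam ∘ j1) :=
    (((sum_gsh hgam).mul_left (2 * lam)).congr fun v => (tC_comp v).symm)
  exact (Function.Injective.summable_iff j1_inj hz).1 hcomp

lemma tsum_tC : ∑' v : V, tC lam gam v = 2 * lam * ∑' v : V, gsh gam v := by
  rw [← Function.Injective.tsum_eq j1_inj (tC_supp hgam)]
  rw [tsum_congr (fun v => tC_comp (lam := lam) (gam := gam) v), tsum_mul_left]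

/-! tD -/

lemma tD_supp : Function.support (tD lam gam) ⊆ Set.range j2 := by
  intro x hx
  have hgne : gam (x.1 + 1) x.2.1 (x.2.2.1 + 1) x.2.2.2 ≠ 0 := by
    intro h
    apply hx
    simp [tD, h]
  refine mem_range_j2 ?_ ?_
  · by_contra h
    push_neg at h
    exact hgne (gz hgam (by omega))
  · by_contra h
    push_neg at h
    exact hgne (gz hgam (by omega))

omit hgam in
lemma tD_comp (v : V) : tD lam gam (j2 v) = 2 * lam * gsh gam v := rfl

lemma sum_tD : Summable (tD lam gam) := by
  have hz : ∀ x ∉ Set.range j2, tD lam gam x = 0 := by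
    intro x hx
    by_contra h
    exact hx (tD_supp hgam h)
  have hcomp : Summable (tD lam gam ∘ j2) :=
    (((sum_gsh hgam).mul_left (2 * lam)).congr fun v => (tD_comp v).symm)
  exact (Function.Injective.summable_iff j2_inj hz).1 hcomp

lemma tsum_tD : ∑' v : V, tD lam gam v = 2 * lam * ∑' v : V, gsh gam v := by
  rw [← Function.Injective.tsum_eq j2_inj (tD_supp hgam)]
  rw [tsum_congr (fun v => tD_comp (lam := lam) (gam := gam) v), tsum_mul_left]

/-! tF/uF etc. -/

omit hgam in
lemma uF_supp : Function.support (uF gam) ⊆ Set.range j1 := by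
  intro x hx
  by_cases h : 1 ≤ x.1 ∧ 1 ≤ x.2.2.1
  · exact mem_range_j1 h.1 h.2
  · exact absurd (uF_neg h) hx

omit hgam in
lemma uF_comp (v : V) : uF gam (j1 v) = tF gam v := by
  rw [uF_pos (v := j1 v)
    ⟨Nat.succ_le_succ (Nat.zero_le _), Nat.succ_le_succ (Nat.zero_le _)⟩]
  rfl

lemma sum_tF : Summable (tF gam) :=
  (((sum_uF hgam).comp_injective j1_inj).congr fun v => uF_comp v)

omit hgam in
lemma tsum_tF : ∑' v : V, tF gam v = ∑' v : V, uF gam v := by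
  rw [← Function.Injective.tsum_eq j1_inj uF_supp]
  exact tsum_congr fun v => (uF_comp v).symm

omit hgam in
lemma uG_supp : Function.support (uG gam) ⊆ Set.range j2 := by
  intro x hx
  by_cases h : 1 ≤ x.2.1 ∧ 1 ≤ x.2.2.2
  · exact mem_range_j2 h.1 h.2
  · exact absurd (uG_neg h) hx

omit hgam in
lemma uG_comp (v : V) : uG gam (j2 v) = tG gam v := by
  rw [uG_pos (v := j2 v)
    ⟨Nat.succ_le_succ (Nat.zero_le _), Nat.succ_le_succ (Nat.zero_le _)⟩]
  rfl

lemma sum_tG : Summable (tG gam) :=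
  (((sum_uG hgam).comp_injective j2_inj).congr fun v => uG_comp v)

omit hgam in
lemma tsum_tG : ∑' v : V, tG gam v = ∑' v : V, uG gam v := by
  rw [← Function.Injective.tsum_eq j2_inj uG_supp]
  exact tsum_congr fun v => (uG_comp v).symm

omit hgam in
lemma uH_supp : Function.support (uH gam) ⊆ Set.range j3 := by
  intro x hx
  by_cases h : 1 ≤ x.2.2.1
  · exact mem_range_j3 h
  · exact absurd (uH_neg h) hx

omit hgam in
lemma uH_comp (v : V) : uH gam (j3 v) = tH gam v := by
  rw [uH_pos (v := j3 v) (Nat.succ_le_succ (Nat.zero_le _))]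
  rfl

lemma sum_tH : Summable (tH gam) :=
  (((sum_uH hgam).comp_injective j3_inj).congr fun v => uH_comp v)

omit hgam in
lemma tsum_tH : ∑' v : V, tH gam v = ∑' v : V, uH gam v := by
  rw [← Function.Injective.tsum_eq j3_inj uH_supp]
  exact tsum_congr fun v => (uH_comp v).symm

omit hgam in
lemma uI_supp : Function.support (uI gam) ⊆ Set.range j4 := by
  intro x hx
  by_cases h : 1 ≤ x.2.2.2
  · exact mem_range_j4 h
  · exact absurd (uI_neg h) hx

omit hgam in
lemma uI_comp (v : V) : uI gam (j4 v) = tI gam v := by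
  rw [uI_pos (v := j4 v) (Nat.succ_le_succ (Nat.zero_le _))]
  rfl

lemma sum_tI : Summable (tI gam) :=
  (((sum_uI hgam).comp_injective j4_inj).congr fun v => uI_comp v)

omit hgam in
lemma tsum_tI : ∑' v : V, tI gam v = ∑' v : V, uI gam v := by
  rw [← Function.Injective.tsum_eq j4_inj uI_supp]
  exact tsum_congr fun v => (uI_comp v).symm

/-! tA -/

omit hgam in
lemma tA_supp : Function.support (tA lam gam) ⊆ Set.range jA := by
  intro x hx
  by_cases h : x.1 = 0 ∧ x.2.1 = 0
  · exact mem_range_jA h.1 h.2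
  · refine absurd ?_ hx
    simp [tA, h]

omit hgam in
lemma tA_comp (p : ℕ × ℕ) :
    tA lam gam (jA p) = lam * qPos gam p.1 * qPos gam p.2 := by
  simp [tA, jA]

lemma sum_qq : Summable (fun p : ℕ × ℕ => qPos gam p.1 * qPos gam p.2) := by
  have hn : Summable (fun n : ℕ => ‖qPos gam n‖) :=
    ((sum_q hgam).abs).congr fun n => (Real.norm_eq_abs _).symm
  exact summable_mul_of_summable_norm hn hn

lemma sum_tA : Summable (tA lam gam) := by
  have hz : ∀ x ∉ Set.range jA, tA lam gam x = 0 := by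
    intro x hx
    by_contra h
    exact hx (tA_supp h)
  have hcomp : Summable (tA lam gam ∘ jA) := by
    refine (((sum_qq hgam).mul_left lam).congr fun p => ?_)
    rw [Function.comp_apply, tA_comp]
    ring
  exact (Function.Injective.summable_iff jA_inj hz).1 hcomp

lemma tsum_tA : ∑' v : V, tA lam gam v = lam := by
  rw [← Function.Injective.tsum_eq jA_inj tA_supp]
  have hsum : Summable (fun p : ℕ × ℕ => lam * qPos gam p.1 * qPos gam p.2) := by
    refine (((sum_qq hgam).mul_left lam).congr fun p => ?_)
    ring
  calc ∑' p : ℕ × ℕ, tA lam gam (jA p)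
      = ∑' p : ℕ × ℕ, lam * qPos gam p.1 * qPos gam p.2 := tsum_congr tA_comp
    _ = ∑' c : ℕ, ∑' d : ℕ, lam * qPos gam c * qPos gam d := Summable.tsum_prod hsum
    _ = ∑' c : ℕ, lam * qPos gam c * ∑' d : ℕ, qPos gam d :=
        tsum_congr fun c => tsum_mul_left
    _ = (∑' c : ℕ, lam * qPos gam c) * ∑' d : ℕ, qPos gam d := tsum_mul_right
    _ = lam * (∑' c : ℕ, qPos gam c) * ∑' d : ℕ, qPos gam d := by rw [tsum_mul_left]
    _ = lam := by rw [q_tsum_one hgam]; ring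

/-! indicators -/

lemma sum_iA : Summable (iA gam) := by
  refine Summable.of_nonneg_of_le (fun v => ?_) (fun v => ?_) (sum_gsh hgam)
  · exact mul_nonneg (gsh_nonneg hgam v) (by positivity)
  · have h1 : (if v.1 = 0 then (1:ℝ) else 0) ≤ 1 := by split_ifs <;> norm_num
    have h2 := mul_le_mul_of_nonneg_left h1 (gsh_nonneg hgam v)
    simpa [iA] using h2

lemma sum_iB : Summable (iB gam) := by
  refine Summable.of_nonneg_of_le (fun v => ?_) (fun v => ?_) (sum_gsh hgam)
  · exact mul_nonneg (gsh_nonneg hgam v) (by positivity)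
  · have h1 : (if v.2.1 = 0 then (1:ℝ) else 0) ≤ 1 := by split_ifs <;> norm_num
    have h2 := mul_le_mul_of_nonneg_left h1 (gsh_nonneg hgam v)
    simpa [iB] using h2

omit hgam in
lemma iA_supp : Function.support (iA gam) ⊆ Set.range jP := by
  intro x hx
  by_cases h : x.1 = 0
  · exact mem_range_jP h
  · refine absurd ?_ hx
    simp [iA, h]

omit hgam in
lemma iB_supp : Function.support (iB gam) ⊆ Set.range jQ := by
  intro x hx
  by_cases h : x.2.1 = 0
  · exact mem_range_jQ h
  · refine absurd ?_ hx
    simp [iB, h]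

lemma tsum_iA : ∑' v : V, iA gam v = ∑' c : ℕ, mar2 gam 1 (c + 1) := by
  rw [← Function.Injective.tsum_eq jP_inj iA_supp]
  rw [P_eq hgam]
  refine tsum_congr fun w => ?_
  simp [iA, jP, gsh]

lemma tsum_iB : ∑' v : V, iB gam v = ∑' c : ℕ, mar2 gam 1 (c + 1) := by
  rw [← Function.Injective.tsum_eq jQ_inj iB_supp]
  rw [P_eq hgam]
  have step1 : ∀ w : ℕ × ℕ × ℕ,
      iB gam (jQ w) = gam 1 (w.1 + 1) (w.2.2 + 1) (w.2.1 + 1) := by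
    intro w
    have : iB gam (jQ w) = gam (w.1 + 1) 1 (w.2.1 + 1) (w.2.2 + 1) := by
      simp [iB, jQ, gsh]
    rw [this, hgam.2.2.1]
  rw [tsum_congr step1]
  exact Equiv.tsum_eq sw23 (fun w : ℕ × ℕ × ℕ => gam 1 (w.1 + 1) (w.2.1 + 1) (w.2.2 + 1))

end sums


/-! ### Master lemma -/

theorem master {lam : ℝ} {gam : ℕ → ℕ → ℕ → ℕ → ℝ}
    (hlam0 : 0 < lam) (hlam1 : lam < 1) (hgam : AdmissibleQuad gam) :
    Summable (fun v : V =>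
      HLCFS lam gam (v.1 + 1) (v.2.1 + 1) (v.2.2.1 + 1) (v.2.2.2 + 1)) ∧
    (∑' v : V, HLCFS lam gam (v.1 + 1) (v.2.1 + 1) (v.2.2.1 + 1) (v.2.2.2 + 1))
      = lam - 2 * ∑' c : ℕ, mar2 gam 1 (c + 1) := by
  have hdec : (fun v : V =>
      HLCFS lam gam (v.1 + 1) (v.2.1 + 1) (v.2.2.1 + 1) (v.2.2.2 + 1))
      = fun v => tA lam gam v + (tB lam gam v + (tC lam gam v + (tD lam gam v +
        (tE gam v + (tF gam v + (tG gam v + (tH gam v + tI gam v))))))) :=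
    funext (H_decomp lam gam)
  have sA := sum_tA hgam (lam := lam)
  have sB := sum_tB hgam hlam0 hlam1
  have sC := sum_tC hgam (lam := lam)
  have sD := sum_tD hgam (lam := lam)
  have sE := sum_tE hgam
  have sF := sum_tF hgam
  have sG := sum_tG hgam
  have sH := sum_tH hgam
  have sI := sum_tI hgam
  have suF := sum_uF hgam
  have suG := sum_uG hgam
  have suH := sum_uH hgam
  have suI := sum_uI hgam
  have S8 : Summable (fun v => tH gam v + tI gam v) := sH.add sI
  have S7 : Summable (fun v => tG gam v + (tH gam v + tI gam v)) := sG.add S8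
  have S6 : Summable (fun v => tF gam v + (tG gam v + (tH gam v + tI gam v))) := sF.add S7
  have S5 : Summable (fun v => tE gam v +
      (tF gam v + (tG gam v + (tH gam v + tI gam v)))) := sE.add S6
  have S4 : Summable (fun v => tD lam gam v + (tE gam v +
      (tF gam v + (tG gam v + (tH gam v + tI gam v))))) := sD.add S5
  have S3 : Summable (fun v => tC lam gam v + (tD lam gam v + (tE gam v +
      (tF gam v + (tG gam v + (tH gam v + tI gam v)))))) := sC.add S4
  have S2 : Summable (fun v => tB lam gam v + (tC lam gam v + (tD lam gam v + (tE gam v +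
      (tF gam v + (tG gam v + (tH gam v + tI gam v))))))) := sB.add S3
  have hsum : Summable (fun v : V =>
      HLCFS lam gam (v.1 + 1) (v.2.1 + 1) (v.2.2.1 + 1) (v.2.2.2 + 1)) := by
    rw [hdec]; exact sA.add S2
  refine ⟨hsum, ?_⟩
  rw [hdec]
  rw [Summable.tsum_add sA S2, Summable.tsum_add sB S3, Summable.tsum_add sC S4, Summable.tsum_add sD S5, Summable.tsum_add sE S6,
    Summable.tsum_add sF S7, Summable.tsum_add sG S8, Summable.tsum_add sH sI]
  rw [tsum_tA hgam, tsum_tB, tsum_tC hgam, tsum_tD hgam,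
    tsum_tF (gam := gam), tsum_tG (gam := gam), tsum_tH (gam := gam), tsum_tI (gam := gam)]
  -- now combine the five pieces back into one tsum
  have hback :
      (∑' v : V, tE gam v) + ((∑' v : V, uF gam v) + ((∑' v : V, uG gam v) +
        ((∑' v : V, uH gam v) + (∑' v : V, uI gam v))))
      = ∑' v : V, (tE gam v + (uF gam v + (uG gam v + (uH gam v + uI gam v)))) := by
    rw [Summable.tsum_add sE (suF.add (suG.add (suH.add suI))),
      Summable.tsum_add suF (suG.add (suH.add suI)), Summable.tsum_add suG (suH.add suI),
      Summable.tsum_add suH suI]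
  rw [show (∑' v : V, tE gam v) + ((∑' v : V, uF gam v) + ((∑' v : V, uG gam v) +
        ((∑' v : V, uH gam v) + (∑' v : V, uI gam v)))) = _ from hback]
  rw [tsum_congr (collapse hgam)]
  have hneg : ∑' v : V, -(gsh gam v *
      ((if v.1 = 0 then (1:ℝ) else 0) + (if v.2.1 = 0 then (1:ℝ) else 0)))
      = -((∑' v : V, iA gam v) + (∑' v : V, iB gam v)) := by
    have h1 : ∀ v : V, -(gsh gam v *
        ((if v.1 = 0 then (1:ℝ) else 0) + (if v.2.1 = 0 then (1:ℝ) else 0)))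
        = -(iA gam v + iB gam v) := by
      intro v
      simp only [iA, iB]
      ring
    rw [tsum_congr h1, tsum_neg, Summable.tsum_add (sum_iA hgam) (sum_iB hgam)]
  rw [hneg, tsum_iA hgam, tsum_iB hgam]
  ring

end LCFSaux

theorem lcfs_pair_drift_total_sum
    (lam : ℝ) (hlam0 : 0 < lam) (hlam1 : lam < 1)
    (gam : ℕ → ℕ → ℕ → ℕ → ℝ) (hgam : AdmissibleQuad gam) :
    Summable (fun v : ℕ × ℕ × ℕ × ℕ =>
      |HLCFS lam gam (v.1 + 1) (v.2.1 + 1) (v.2.2.1 + 1) (v.2.2.2 + 1)|) ∧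
    (∑' v : ℕ × ℕ × ℕ × ℕ,
        HLCFS lam gam (v.1 + 1) (v.2.1 + 1) (v.2.2.1 + 1) (v.2.2.2 + 1)) =
      lam - 2 * ∑' x2 : ℕ, mar2 gam 1 (x2 + 1) ∧
    ((∀ x1 y1 x2 y2 : ℕ, 1 ≤ x1 → 1 ≤ y1 → 1 ≤ x2 → 1 ≤ y2 →
        HLCFS lam gam x1 y1 x2 y2 = 0) →
      qPos gam 0 = 1 - lam) := by
  obtain ⟨hsum, htsum⟩ := LCFSaux.master hlam0 hlam1 hgam
  refine ⟨hsum.abs, htsum, ?_⟩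
  intro hH
  have h0 : ∀ v : ℕ × ℕ × ℕ × ℕ,
      HLCFS lam gam (v.1 + 1) (v.2.1 + 1) (v.2.2.1 + 1) (v.2.2.2 + 1) = 0 :=
    fun v => hH _ _ _ _ (by omega) (by omega) (by omega) (by omega)
  have hz : (0 : ℝ) = lam - 2 * ∑' x2 : ℕ, mar2 gam 1 (x2 + 1) := by
    rw [← htsum, tsum_congr h0, tsum_zero]
  have hq0 : qPos gam 0 = 1 - ∑' z : ℕ, 2 * mar2 gam 1 (z + 1) := by simp [qPos]
  rw [hq0, tsum_mul_left]
  linarith
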